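/- Let p be prime and t = p^j a power of p. Then for every integer e and nonnegative integer k, C(e - t, k) ≡ ∑_{0 ≤ b ≤ k, b ≡ k (mod t)} (-1)^{k-b} C(e, b) (mod p). -/

import Mathlib

theorem lemB (t c : ℕ) (ht : 1 ≤ t) :
    Ring.choose (-(t : ℤ)) c = (-1) ^ c * ((t - 1 + c).choose c : ℤ) := by
  obtain ⟨t', rfl⟩ : ∃ t', t = t' + 1 := ⟨t - 1, by omega⟩
  have h0 : Ring.choose (-(((t' : ℕ) + 1 : ℕ)) : ℤ) c
      = Int.multichoose (-(((t' : ℕ) + 1 : ℕ) : ℤ) - c + 1) c := rfl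
  rw [h0]
  have harg : (-(((t' : ℕ) + 1 : ℕ) : ℤ) - c + 1) = -((t' + c : ℕ) : ℤ) := by push_cast; ring
  rw [harg]
  rcases Nat.eq_zero_or_pos (t' + c) with h | h
  · obtain ⟨rfl, rfl⟩ : t' = 0 ∧ c = 0 := by omega
    simp [Int.multichoose]
  · obtain ⟨m, hm⟩ : ∃ m, t' + c = m + 1 := ⟨t' + c - 1, by omega⟩
    rw [hm]
    have : (-((m + 1 : ℕ) : ℤ)) = Int.negSucc m := by
      rw [Int.negSucc_eq]; push_cast; ring
    rw [this]
    show ((-1) ^ c * Nat.choose (m + 1) c : ℤ) = _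
    rw [show t' + 1 - 1 + c = m + 1 from by omega]

theorem lemA (p : ℕ) (hp : p.Prime) : ∀ j s : ℕ,
    ((p ^ j - 1 + s).choose s : ℤ) ≡ (if p ^ j ∣ s then 1 else 0) [ZMOD (p : ℤ)] := by
  haveI : Fact p.Prime := ⟨hp⟩
  have hp2 : 2 ≤ p := hp.two_le
  intro j
  induction j with
  | zero => intro s; simp
  | succ j ih =>
    intro s
    obtain ⟨q, r, hs, hrp⟩ : ∃ q r, s = p * q + r ∧ r < p :=
      ⟨s / p, s % p, (Nat.div_add_mod s p).symm, Nat.mod_lt _ hp.pos⟩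
    have hP1 : 1 ≤ p ^ j := Nat.one_le_pow _ _ hp.pos
    have hmain := Choose.choose_modEq_choose_mod_mul_choose_div
      (n := p ^ (j + 1) - 1 + s) (k := s) (p := p)
    have hpow : p ^ (j + 1) = p * p ^ j := by rw [pow_succ]; ring
    have hA : p ≤ p * p ^ j := Nat.le_mul_of_pos_right _ hP1
    have hsq : s % p = r := by rw [hs, Nat.mul_add_mod]; exact Nat.mod_eq_of_lt hrp
    have hsd : s / p = q := by rw [hs, Nat.mul_add_div hp.pos, Nat.div_eq_of_lt hrp, Nat.add_zero]
    rw [hsq, hsd] at hmain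
    by_cases h : r = 0
    · subst h
      have hn2 : p ^ (j + 1) - 1 + s = p * (p ^ j + q - 1) + (p - 1) := by
        rw [hpow, Nat.mul_sub, Nat.mul_add, Nat.mul_one]
        omega
      have hmod : (p ^ (j + 1) - 1 + s) % p = p - 1 := by
        rw [hn2, Nat.mul_add_mod]; exact Nat.mod_eq_of_lt (by omega)
      have hdiv : (p ^ (j + 1) - 1 + s) / p = p ^ j - 1 + q := by
        rw [hn2, Nat.mul_add_div hp.pos, Nat.div_eq_of_lt (show p - 1 < p by omega)]
        omega
      rw [hmod, hdiv] at hmain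
      have hiff : p ^ (j + 1) ∣ s ↔ p ^ j ∣ q := by
        rw [hpow, hs, Nat.add_zero]
        exact mul_dvd_mul_iff_left (by omega : p ≠ 0)
      calc ((p ^ (j + 1) - 1 + s).choose s : ℤ)
          ≡ ((p ^ j - 1 + q).choose q : ℤ) [ZMOD (p:ℤ)] := by
            simpa using hmain
        _ ≡ (if p ^ j ∣ q then 1 else 0) [ZMOD (p:ℤ)] := ih q
        _ = (if p ^ (j+1) ∣ s then 1 else 0) := by simp [hiff]
    · have hn2 : p ^ (j + 1) - 1 + s = p * (p ^ j + q) + (r - 1) := by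
        rw [hpow, Nat.mul_add]
        omega
      have hmod : (p ^ (j + 1) - 1 + s) % p = r - 1 := by
        rw [hn2, Nat.mul_add_mod]; exact Nat.mod_eq_of_lt (by omega)
      rw [hmod] at hmain
      have hz : (r - 1).choose r = 0 := Nat.choose_eq_zero_of_lt (by omega)
      rw [hz] at hmain
      simp only [Nat.zero_mul, Nat.cast_zero, zero_mul] at hmain
      have hnd : ¬ p ^ (j + 1) ∣ s := by
        intro hd
        have h1 : p ∣ s := dvd_trans (dvd_pow_self p (Nat.succ_ne_zero j)) hd
        have h2 : s % p = 0 := Nat.eq_zero_of_dvd_of_lt h1 |> fun _ => Nat.mod_eq_zero_of_dvd h1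
        omega
      rw [if_neg hnd]
      exact_mod_cast hmain

/-- Let `p` be prime and `t = p^j`. Then for every integer `e` and `k : ℕ`,
`C(e - t, k) ≡ ∑_{0 ≤ b ≤ k, b ≡ k (mod t)} (-1)^{k-b} C(e, b) (mod p)`. -/
theorem stmt_10 (p j : ℕ) (hp : p.Prime) (t : ℕ) (ht : t = p ^ j) (e : ℤ) (k : ℕ) :
    Ring.choose (e - (t : ℤ)) k
      ≡ (∑ b ∈ (Finset.range (k + 1)).filter (fun b => b % t = k % t),
          (-1) ^ (k - b) * Ring.choose e b)
      [ZMOD (p : ℤ)] := by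
  have ht1 : 1 ≤ t := ht ▸ Nat.one_le_pow _ _ hp.pos
  have hvd : Ring.choose (e - (t : ℤ)) k
      = ∑ ij ∈ Finset.HasAntidiagonal.antidiagonal k, Ring.choose e ij.1 * Ring.choose (-(t : ℤ)) ij.2 := by
    rw [sub_eq_add_neg, Ring.add_choose_eq k (Commute.all _ _)]
  rw [hvd]
  rw [Finset.Nat.sum_antidiagonal_eq_sum_range_succ_mk]
  simp only [lemB t _ ht1]
  -- now goal: ∑ b in range (k+1), Ring.choose e b * ((-1)^(k-b) * C(t-1+(k-b), k-b))
  --   ≡ filtered sum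
  rw [← ZMod.intCast_eq_intCast_iff]
  push_cast
  rw [Finset.sum_filter]
  refine Finset.sum_congr rfl ?_
  intro b hb
  have hbk : b ≤ k := by simp at hb; omega
  have hA := lemA p hp j (k - b)
  rw [← ht] at hA
  have hA' : (((t - 1 + (k - b)).choose (k - b) : ℤ) : ZMod p)
      = ((if t ∣ (k - b) then 1 else 0 : ℤ) : ZMod p) := by
    rw [ZMod.intCast_eq_intCast_iff]; exact hA
  rw [show ((t - 1 + (k - b)).choose (k - b) : ZMod p)
      = (((t - 1 + (k - b)).choose (k - b) : ℤ) : ZMod p) by push_cast; ring, hA']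
  have hdvd : t ∣ (k - b) ↔ b % t = k % t := by
    rw [← Nat.modEq_iff_dvd' hbk]; rfl
  by_cases hc : b % t = k % t
  · rw [if_pos (hdvd.mpr hc), if_pos hc]
    push_cast
    ring
  · rw [if_neg (fun hd => hc (hdvd.mp hd)), if_neg hc]
    push_cast
    ring
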